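/- Let X₀ ∈ ℂ^{m×n} be arbitrary, X_{0,r} its best rank-r approximation, and b = A X₀ + ν. Then b = A X_{0,r} + ν̃ where ‖ν̃‖₂ ≤ √(1+δ_r(A)) · ( ‖X₀ − X_{0,r}‖_F + ‖X₀ − X_{0,r}‖_*/√r ) + ‖ν‖₂. -/

import Mathlib

open scoped BigOperators Matrix ComplexOrder

/-- Frobenius (trace) inner product on complex matrices: `⟪X, Y⟫ = tr(Yᴴ X)`. -/
noncomputable def frobInner {m n : ℕ} (X Y : Matrix (Fin m) (Fin n) ℂ) : ℂ :=
  (Yᴴ * X).trace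

/-- Frobenius norm of a complex matrix. -/
noncomputable def frobNorm {m n : ℕ} (X : Matrix (Fin m) (Fin n) ℂ) : ℝ :=
  Real.sqrt (∑ i, ∑ j, ‖X i j‖ ^ 2)

/-- Euclidean norm on `ℂ^p`. -/
noncomputable def eNorm {p : ℕ} (v : Fin p → ℂ) : ℝ :=
  Real.sqrt (∑ k, ‖v k‖ ^ 2)

/-- Hermitian inner product on `ℂ^p` (linear in the first argument). -/
noncomputable def eInner {p : ℕ} (u v : Fin p → ℂ) : ℂ :=
  ∑ k, (starRingEnd ℂ) (v k) * u k

/-- `A` satisfies the rank-`r` restricted isometry inequalities with constant `δ`: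
`(1-δ)‖X‖_F² ≤ ‖A X‖₂² ≤ (1+δ)‖X‖_F²` for all `X` with `rank X ≤ r`. -/
def RIPwith {m n p : ℕ} (A : Matrix (Fin m) (Fin n) ℂ →ₗ[ℂ] (Fin p → ℂ)) (r : ℕ) (δ : ℝ) : Prop :=
  ∀ X : Matrix (Fin m) (Fin n) ℂ, X.rank ≤ r →
    (1 - δ) * frobNorm X ^ 2 ≤ eNorm (A X) ^ 2 ∧ eNorm (A X) ^ 2 ≤ (1 + δ) * frobNorm X ^ 2

/-- `P` is the orthogonal projection onto the span of `S`
with respect to the Frobenius inner product. -/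
def IsOrthProjOn {m n : ℕ} (P : Matrix (Fin m) (Fin n) ℂ →ₗ[ℂ] Matrix (Fin m) (Fin n) ℂ)
    (S : Set (Matrix (Fin m) (Fin n) ℂ)) : Prop :=
  (∀ X, P (P X) = P X) ∧ LinearMap.range P = Submodule.span ℂ S ∧
    (∀ X Y, frobInner (P X) Y = frobInner X (P Y))

/-- `B` is the adjoint of `A` w.r.t. the Frobenius and Euclidean inner products. -/
def IsAdjoint {m n p : ℕ} (A : Matrix (Fin m) (Fin n) ℂ →ₗ[ℂ] (Fin p → ℂ))
    (B : (Fin p → ℂ) →ₗ[ℂ] Matrix (Fin m) (Fin n) ℂ) : Prop :=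
  ∀ X v, eInner (A X) v = frobInner X (B v)

/-- The singular values of a complex matrix (as square roots of the eigenvalues of `Xᴴ X`). -/
noncomputable def singVals {m n : ℕ} (X : Matrix (Fin m) (Fin n) ℂ) : Fin n → ℝ :=
  fun i => Real.sqrt ((Matrix.posSemidef_conjTranspose_mul_self X).1.eigenvalues i)

/-- The nuclear norm: sum of all singular values. -/
noncomputable def nuclearNorm {m n : ℕ} (X : Matrix (Fin m) (Fin n) ℂ) : ℝ :=
  ∑ i, singVals X i

lemma eNorm_eq {p : ℕ} (v : Fin p → ℂ) :
    eNorm v = ‖(WithLp.equiv 2 (Fin p → ℂ)).symm v‖ := by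
  rw [EuclideanSpace.norm_eq]
  rfl

lemma eNorm_nonneg {p : ℕ} (v : Fin p → ℂ) : 0 ≤ eNorm v := Real.sqrt_nonneg _

lemma eNorm_add_le {p : ℕ} (u v : Fin p → ℂ) : eNorm (u + v) ≤ eNorm u + eNorm v := by
  simp only [eNorm_eq]
  rw [show (WithLp.equiv 2 (Fin p → ℂ)).symm (u + v)
      = (WithLp.equiv 2 (Fin p → ℂ)).symm u + (WithLp.equiv 2 (Fin p → ℂ)).symm v from rfl]
  exact norm_add_le _ _

lemma eNorm_sum_le {p : ℕ} {ι : Type*} (s : Finset ι) (f : ι → (Fin p → ℂ)) :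
    eNorm (∑ j ∈ s, f j) ≤ ∑ j ∈ s, eNorm (f j) := by
  classical
  induction s using Finset.induction with
  | empty => simp [eNorm]
  | insert _ _ h ih =>
      rw [Finset.sum_insert h, Finset.sum_insert h]
      exact (eNorm_add_le _ _).trans (by linarith)


lemma matrix_rank_add_le {m n : ℕ} (A B : Matrix (Fin m) (Fin n) ℂ) :
    (A + B).rank ≤ A.rank + B.rank := by
  classical
  have h : LinearMap.range (A + B).mulVecLin ≤
      LinearMap.range A.mulVecLin ⊔ LinearMap.range B.mulVecLin := by
    rintro _ ⟨x, rfl⟩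
    rw [Matrix.mulVecLin_add]
    exact Submodule.add_mem_sup ⟨x, rfl⟩ ⟨x, rfl⟩
  calc (A + B).rank ≤ Module.finrank ℂ
        (LinearMap.range A.mulVecLin ⊔ LinearMap.range B.mulVecLin : Submodule ℂ (Fin m → ℂ)) :=
        Submodule.finrank_mono h
    _ ≤ _ := Submodule.finrank_add_le_finrank_add_finrank _ _

lemma rank_vecMulVec_le {m n : ℕ} (u : Fin m → ℂ) (w : Fin n → ℂ) :
    (Matrix.vecMulVec u w).rank ≤ 1 := by
  rw [Matrix.vecMulVec_eq (Fin 1)]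
  exact (Matrix.rank_mul_le_left _ _).trans ((Matrix.rank_le_card_width _).trans (by simp))

lemma rank_sum_vecMulVec_le {m n : ℕ} {ι : Type*} (s : Finset ι)
    (c : ι → (Fin m → ℂ)) (d : ι → (Fin n → ℂ)) :
    (∑ i ∈ s, Matrix.vecMulVec (c i) (d i)).rank ≤ s.card := by
  classical
  induction s using Finset.induction with
  | empty => simp [Matrix.rank_zero]
  | @insert a s' h ih =>
      rw [Finset.sum_insert h, Finset.card_insert_of_notMem h]
      have h1 := rank_vecMulVec_le (c a) (d a)
      have h2 := matrix_rank_add_le (Matrix.vecMulVec (c a) (d a))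
        (∑ i ∈ s', Matrix.vecMulVec (c i) (d i))
      omega


lemma gram_sum {m n : ℕ} (Z : Matrix (Fin m) (Fin n) ℂ)
    (v : Fin n → (Fin n → ℂ)) (lam : Fin n → ℝ)
    (horth : ∀ i j, star (v i) ⬝ᵥ v j = if i = j then 1 else 0)
    (heig : ∀ i, (Zᴴ * Z) *ᵥ v i = (lam i : ℂ) • v i)
    (S : Finset (Fin n)) :
    ∑ a, ∑ b, ‖(∑ i ∈ S, Matrix.vecMulVec (Z *ᵥ v i) (star (v i))) a b‖ ^ 2
      = ∑ i ∈ S, lam i := by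
  classical
  set M : Matrix (Fin m) (Fin n) ℂ := ∑ i ∈ S, Matrix.vecMulVec (Z *ᵥ v i) (star (v i)) with hM
  have key : ∀ i' i : Fin n,
      (∑ a, (Z *ᵥ v i) a * (starRingEnd ℂ) ((Z *ᵥ v i') a))
        * (∑ b, (starRingEnd ℂ) (v i b) * v i' b)
      = if i = i' then (lam i : ℂ) else 0 := by
    intro i' i
    have h2 : (∑ b, (starRingEnd ℂ) (v i b) * v i' b) = star (v i) ⬝ᵥ v i' := rfl
    rw [h2, horth]
    by_cases h : i = i'
    · subst h
      simp only [if_pos rfl, mul_one]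
      have : (∑ a, (Z *ᵥ v i) a * (starRingEnd ℂ) ((Z *ᵥ v i) a))
          = star (Z *ᵥ v i) ⬝ᵥ (Z *ᵥ v i) := by
        simp [dotProduct, mul_comm]
      rw [this, Matrix.star_mulVec, ← Matrix.dotProduct_mulVec, Matrix.mulVec_mulVec, heig,
        dotProduct_smul, horth]
      simp
    · simp [h]
  have hC : ((∑ a, ∑ b, ‖M a b‖ ^ 2 : ℝ) : ℂ) = ∑ i ∈ S, (lam i : ℂ) := by
    push_cast
    calc (∑ a, ∑ b, ((‖M a b‖ : ℂ)) ^ 2)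
        = ∑ a, ∑ b, M a b * (starRingEnd ℂ) (M a b) := by
          refine Finset.sum_congr rfl fun a _ => Finset.sum_congr rfl fun b _ => ?_
          rw [Complex.mul_conj']
      _ = ∑ a, ∑ b, ∑ i ∈ S, ∑ i' ∈ S,
            ((Z *ᵥ v i) a * (starRingEnd ℂ) ((Z *ᵥ v i') a))
              * ((starRingEnd ℂ) (v i b) * v i' b) := by
          refine Finset.sum_congr rfl fun a _ => Finset.sum_congr rfl fun b _ => ?_
          rw [hM]
          simp only [Finset.sum_apply, Matrix.sum_apply, map_sum, Finset.sum_mul_sum,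
            Matrix.vecMulVec_apply, Pi.star_apply, map_mul, RingHom.id_apply]
          refine Finset.sum_congr rfl fun i _ => Finset.sum_congr rfl fun i' _ => ?_
          simp only [RCLike.star_def, RingHomCompTriple.comp_apply, RingHom.id_apply]
          ring
      _ = ∑ i ∈ S, ∑ i' ∈ S,
            (∑ a, (Z *ᵥ v i) a * (starRingEnd ℂ) ((Z *ᵥ v i') a))
              * (∑ b, (starRingEnd ℂ) (v i b) * v i' b) := by
          calc (∑ a : Fin m, ∑ b : Fin n, ∑ i ∈ S, ∑ i' ∈ S,
                  ((Z *ᵥ v i) a * (starRingEnd ℂ) ((Z *ᵥ v i') a))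
                    * ((starRingEnd ℂ) (v i b) * v i' b))
              = ∑ a : Fin m, ∑ i ∈ S, ∑ b : Fin n, ∑ i' ∈ S, _ :=
                Finset.sum_congr rfl fun _ _ => Finset.sum_comm
            _ = ∑ a : Fin m, ∑ i ∈ S, ∑ i' ∈ S, ∑ b : Fin n, _ :=
                Finset.sum_congr rfl fun _ _ => Finset.sum_congr rfl fun _ _ =>
                  Finset.sum_comm
            _ = ∑ i ∈ S, ∑ a : Fin m, ∑ i' ∈ S, ∑ b : Fin n, _ := Finset.sum_comm
            _ = ∑ i ∈ S, ∑ i' ∈ S, ∑ a : Fin m, ∑ b : Fin n,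
                  ((Z *ᵥ v i) a * (starRingEnd ℂ) ((Z *ᵥ v i') a))
                    * ((starRingEnd ℂ) (v i b) * v i' b) :=
                Finset.sum_congr rfl fun _ _ => Finset.sum_comm
            _ = _ := Finset.sum_congr rfl fun i _ => Finset.sum_congr rfl fun i' _ =>
                  (Finset.sum_mul_sum _ _ _ _).symm
      _ = ∑ i ∈ S, (lam i : ℂ) := by
          refine Finset.sum_congr rfl fun i _ => ?_
          simp_rw [key]
          simp_all
  exact_mod_cast hC

lemma frobNorm_nonneg {m n : ℕ} (X : Matrix (Fin m) (Fin n) ℂ) : 0 ≤ frobNorm X :=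
  Real.sqrt_nonneg _

set_option maxHeartbeats 2000000 in
lemma AZ_bound {m n p r : ℕ} (hr : 1 ≤ r)
    (A : Matrix (Fin m) (Fin n) ℂ →ₗ[ℂ] (Fin p → ℂ))
    (δ : ℝ) (hδ0 : 0 ≤ δ) (hA : RIPwith A r δ) (Z : Matrix (Fin m) (Fin n) ℂ) :
    eNorm (A Z) ≤ Real.sqrt (1 + δ) * (frobNorm Z + nuclearNorm Z / Real.sqrt r) := by
  classical
  set hps := Matrix.posSemidef_conjTranspose_mul_self Z with hps_def
  set hH := hps.1 with hH_def
  set lam : Fin n → ℝ := hH.eigenvalues with lam_def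
  have lam_nonneg : ∀ i, 0 ≤ lam i := fun i => hps.eigenvalues_nonneg i
  set v : Fin n → (Fin n → ℂ) := fun i => ⇑(hH.eigenvectorBasis i) with v_def
  -- orthonormality
  have horth : ∀ i j, star (v i) ⬝ᵥ v j = if i = j then 1 else 0 := by
    intro i j
    have h1 : star (Matrix.IsHermitian.eigenvectorUnitary hH : Matrix (Fin n) (Fin n) ℂ) *
        (Matrix.IsHermitian.eigenvectorUnitary hH : Matrix (Fin n) (Fin n) ℂ) = 1 :=
      Matrix.mem_unitaryGroup_iff'.mp (Matrix.IsHermitian.eigenvectorUnitary hH).2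
    have h2 := congrFun (congrFun h1 i) j
    simp only [Matrix.mul_apply, Matrix.star_apply,
      Matrix.IsHermitian.eigenvectorUnitary_apply, Matrix.one_apply] at h2
    rw [← h2]
    rfl
  -- completeness
  have hcompl : ∀ c b, (∑ i, v i c * (starRingEnd ℂ) (v i b)) = if c = b then 1 else 0 := by
    intro c b
    have h1 : (Matrix.IsHermitian.eigenvectorUnitary hH : Matrix (Fin n) (Fin n) ℂ) *
        star (Matrix.IsHermitian.eigenvectorUnitary hH : Matrix (Fin n) (Fin n) ℂ) = 1 :=
      Matrix.mem_unitaryGroup_iff.mp (Matrix.IsHermitian.eigenvectorUnitary hH).2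
    have h2 := congrFun (congrFun h1 c) b
    simp only [Matrix.mul_apply, Matrix.star_apply,
      Matrix.IsHermitian.eigenvectorUnitary_apply, Matrix.one_apply] at h2
    rw [← h2]
    rfl
  -- eigenvector property
  have heig : ∀ i, (Zᴴ * Z) *ᵥ v i = (lam i : ℂ) • v i := by
    intro i
    have := hH.mulVec_eigenvectorBasis i
    rw [this]
    ext k
    simp only [Pi.smul_apply, smul_eq_mul, Complex.real_smul]
    rfl
  -- the full decomposition of Z
  have hcomp : (∑ i, Matrix.vecMulVec (Z *ᵥ v i) (star (v i))) = Z := by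
    ext a b
    simp only [Matrix.sum_apply, Matrix.vecMulVec_apply, Pi.star_apply, Matrix.mulVec,
      dotProduct, RCLike.star_def]
    calc (∑ i, (∑ c, Z a c * v i c) * (starRingEnd ℂ) (v i b))
        = ∑ i, ∑ c, Z a c * (v i c * (starRingEnd ℂ) (v i b)) := by
          refine Finset.sum_congr rfl fun i _ => ?_
          rw [Finset.sum_mul]
          exact Finset.sum_congr rfl fun c _ => by ring
      _ = ∑ c, ∑ i, Z a c * (v i c * (starRingEnd ℂ) (v i b)) := Finset.sum_comm
      _ = ∑ c, Z a c * (∑ i, v i c * (starRingEnd ℂ) (v i b)) := by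
          refine Finset.sum_congr rfl fun c _ => ?_
          rw [Finset.mul_sum]
      _ = Z a b := by
          simp_rw [hcompl]
          simp
  -- sorting permutation
  set g : Equiv.Perm (Fin n) := Tuple.sort (fun i => -(lam i)) with g_def
  set ν : Fin n → ℝ := fun t => lam (g t) with ν_def
  set w : Fin n → (Fin n → ℂ) := fun t => v (g t) with w_def
  have ν_nonneg : ∀ t, 0 ≤ ν t := fun t => lam_nonneg _
  have hanti : ∀ s t : Fin n, s ≤ t → ν t ≤ ν s := by
    intro s t hst
    have := Tuple.monotone_sort (fun i => -(lam i)) hst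
    simpa [ν_def] using this
  have horth' : ∀ i j, star (w i) ⬝ᵥ w j = if i = j then 1 else 0 := by
    intro i j
    rw [w_def]
    simp only []
    rw [horth (g i) (g j)]
    simp [EmbeddingLike.apply_eq_iff_eq]
  have heig' : ∀ i, (Zᴴ * Z) *ᵥ w i = (ν i : ℂ) • w i := fun i => heig (g i)
  -- block matrices
  set N : Finset (Fin n) → Matrix (Fin m) (Fin n) ℂ :=
    fun S => ∑ t ∈ S, Matrix.vecMulVec (Z *ᵥ w t) (star (w t)) with N_def
  have frobN : ∀ S : Finset (Fin n), frobNorm (N S) = Real.sqrt (∑ t ∈ S, ν t) := by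
    intro S
    exact congrArg Real.sqrt (gram_sum Z w ν horth' heig' S)
  have rankN : ∀ S : Finset (Fin n), (N S).rank ≤ S.card := by
    intro S
    exact rank_sum_vecMulVec_le S _ _
  have stepN : ∀ S : Finset (Fin n), S.card ≤ r →
      eNorm (A (N S)) ≤ Real.sqrt (1 + δ) * Real.sqrt (∑ t ∈ S, ν t) := by
    intro S hS
    have h2 := (hA (N S) ((rankN S).trans hS)).2
    have h3 : eNorm (A (N S)) = Real.sqrt (eNorm (A (N S)) ^ 2) := by
      rw [Real.sqrt_sq (eNorm_nonneg _)]
    rw [h3]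
    calc Real.sqrt (eNorm (A (N S)) ^ 2) ≤ Real.sqrt ((1 + δ) * frobNorm (N S) ^ 2) :=
          Real.sqrt_le_sqrt h2
      _ = Real.sqrt (1 + δ) * frobNorm (N S) := by
          rw [Real.sqrt_mul (by linarith), Real.sqrt_sq (frobNorm_nonneg _)]
      _ = Real.sqrt (1 + δ) * Real.sqrt (∑ t ∈ S, ν t) := by rw [frobN S]
  -- blocks
  set B : ℕ → Finset (Fin n) := fun j => Finset.univ.filter (fun t : Fin n => (t : ℕ) / r = j)
    with B_def
  have hmaps : ∀ t : Fin n, t ∈ Finset.univ → (t : ℕ) / r ∈ Finset.range n :=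
    fun t _ => Finset.mem_range.mpr (lt_of_le_of_lt (Nat.div_le_self _ _) t.2)
  have hpart : ∀ (M : Type) [AddCommMonoid M] (f : Fin n → M),
      ∑ j ∈ Finset.range n, ∑ t ∈ B j, f t = ∑ t, f t := by
    intro M _ f
    exact Finset.sum_fiberwise_of_maps_to hmaps f
  have cardB : ∀ j, (B j).card ≤ r := by
    intro j
    have : ∀ t ∈ B j, (t : ℕ) - j * r ∈ Finset.range r := by
      intro t ht
      rw [B_def, Finset.mem_filter] at ht
      have h1 : (t : ℕ) / r = j := ht.2
      have h2 : j * r ≤ (t : ℕ) := by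
        rw [← h1]; exact Nat.div_mul_le_self _ _
      have h3 : (t : ℕ) < j * r + r := by
        have hmod := Nat.div_add_mod (t : ℕ) r
        have hlt := Nat.mod_lt (t : ℕ) (show 0 < r by omega)
        rw [h1, Nat.mul_comm r j] at hmod
        omega
      exact Finset.mem_range.mpr (by omega)
    have hinj : Set.InjOn (fun t : Fin n => (t : ℕ) - j * r) (B j) := by
      intro s hs t ht hst
      rw [B_def, Finset.mem_coe, Finset.mem_filter] at hs ht
      have h2s : j * r ≤ (s : ℕ) := by rw [← hs.2]; exact Nat.div_mul_le_self _ _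
      have h2t : j * r ≤ (t : ℕ) := by rw [← ht.2]; exact Nat.div_mul_le_self _ _
      have : (s : ℕ) = (t : ℕ) := by simp only [] at hst; omega
      exact Fin.ext this
    calc (B j).card ≤ (Finset.range r).card := Finset.card_le_card_of_injOn _ this hinj
      _ = r := Finset.card_range r
  -- main decomposition of Z into blocks
  have hZ : Z = ∑ j ∈ Finset.range n, N (B j) := by
    symm
    calc ∑ j ∈ Finset.range n, N (B j)
        = ∑ t, Matrix.vecMulVec (Z *ᵥ w t) (star (w t)) :=
          hpart _ (fun t => Matrix.vecMulVec (Z *ᵥ w t) (star (w t)))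
      _ = ∑ i, Matrix.vecMulVec (Z *ᵥ v i) (star (v i)) :=
          Equiv.sum_comp g (fun i => Matrix.vecMulVec (Z *ᵥ v i) (star (v i)))
      _ = Z := hcomp
  have hNuniv : N Finset.univ = Z :=
    (Equiv.sum_comp g (fun i => Matrix.vecMulVec (Z *ᵥ v i) (star (v i)))).trans hcomp
  have frobZ : frobNorm Z = Real.sqrt (∑ t, ν t) := by
    rw [← hNuniv]
    exact frobN Finset.univ
  have nucZ : nuclearNorm Z = ∑ t, Real.sqrt (ν t) := by
    calc nuclearNorm Z = ∑ i, Real.sqrt (lam i) := rfl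
      _ = ∑ t, Real.sqrt (ν t) :=
          (Equiv.sum_comp g (fun i => Real.sqrt (lam i))).symm
  -- the combinatorial bound on the blocks
  have hrR : (0:ℝ) < (r:ℝ) := by exact_mod_cast Nat.lt_of_lt_of_le Nat.zero_lt_one hr
  have hsr : (0:ℝ) < Real.sqrt r := Real.sqrt_pos.mpr hrR
  have sumBound : ∑ j ∈ Finset.range n, Real.sqrt (∑ t ∈ B j, ν t)
      ≤ Real.sqrt (∑ t, ν t) + (∑ t, Real.sqrt (ν t)) / Real.sqrt r := by
    rcases Nat.eq_zero_or_pos n with hn | hn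
    · subst hn
      simp
    · rw [Finset.range_eq_Ico, Finset.sum_eq_sum_Ico_succ_bot hn]
      have hterm0 : Real.sqrt (∑ t ∈ B 0, ν t) ≤ Real.sqrt (∑ t, ν t) :=
        Real.sqrt_le_sqrt (Finset.sum_le_sum_of_subset_of_nonneg (Finset.subset_univ _)
          (fun t _ _ => ν_nonneg t))
      have hterm : ∀ j ∈ Finset.Ico 1 n, Real.sqrt (∑ t ∈ B j, ν t)
          ≤ (∑ t ∈ B (j - 1), Real.sqrt (ν t)) / Real.sqrt r := by
        intro j hj
        rw [Finset.mem_Ico] at hj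
        rcases Finset.eq_empty_or_nonempty (B j) with hBe | ⟨t₀, ht₀⟩
        · rw [hBe]
          simp only [Finset.sum_empty, Real.sqrt_zero]
          positivity
        · have ht₀' : (t₀ : ℕ) / r = j := by
            rw [B_def, Finset.mem_filter] at ht₀; exact ht₀.2
          have hjr_le : j * r ≤ (t₀ : ℕ) := by
            rw [← ht₀']; exact Nat.div_mul_le_self _ _
          have hjr : j * r < n := lt_of_le_of_lt hjr_le t₀.2
          set tmin : Fin n := ⟨j * r, hjr⟩ with tmin_def
          -- bound the j-th block sum
          have h1 : ∑ t ∈ B j, ν t ≤ (r : ℝ) * ν tmin := by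
            have hb1 : ∀ t ∈ B j, ν t ≤ ν tmin := by
              intro t ht
              rw [B_def, Finset.mem_filter] at ht
              refine hanti tmin t ?_
              show (tmin : ℕ) ≤ (t : ℕ)
              rw [tmin_def]
              show j * r ≤ (t : ℕ)
              rw [← ht.2]; exact Nat.div_mul_le_self _ _
            calc ∑ t ∈ B j, ν t ≤ (B j).card • ν tmin :=
                  Finset.sum_le_card_nsmul _ _ _ hb1
              _ = ((B j).card : ℝ) * ν tmin := nsmul_eq_mul _ _
              _ ≤ (r : ℝ) * ν tmin := by
                  refine mul_le_mul_of_nonneg_right ?_ (ν_nonneg tmin)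
                  exact_mod_cast cardB j
          -- the (j-1)-th block has at least r elements, each with larger value
          have hjr_eq : (j - 1) * r + r = j * r := by
            calc (j - 1) * r + r = (j - 1 + 1) * r := by ring
              _ = j * r := by rw [Nat.sub_add_cancel hj.1]
          have hcard : r ≤ (B (j - 1)).card := by
            have hmem : ∀ k ∈ Finset.range r,
                (⟨((j - 1) * r + k) % n, Nat.mod_lt _ hn⟩ : Fin n) ∈ B (j - 1) := by
              intro k hk
              rw [Finset.mem_range] at hk
              have hlt : (j - 1) * r + k < n := by omega
              rw [B_def, Finset.mem_filter]
              refine ⟨Finset.mem_univ _, ?_⟩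
              show (((j - 1) * r + k) % n) / r = j - 1
              rw [Nat.mod_eq_of_lt hlt, Nat.mul_comm, Nat.mul_add_div (by omega) (j-1) k,
                Nat.div_eq_of_lt hk]
              omega
            refine le_trans (le_of_eq (Finset.card_range r).symm)
              (Finset.card_le_card_of_injOn _ hmem ?_)
            intro k hk k' hk' hkk'
            rw [Finset.mem_coe, Finset.mem_range] at hk hk'
            have h1' : (j - 1) * r + k < n := by omega
            have h2' : (j - 1) * r + k' < n := by omega
            have := congrArg (fun x : Fin n => (x : ℕ)) hkk'
            simp only [Nat.mod_eq_of_lt h1', Nat.mod_eq_of_lt h2'] at this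
            omega
          have h2 : (r : ℝ) * Real.sqrt (ν tmin) ≤ ∑ t ∈ B (j - 1), Real.sqrt (ν t) := by
            have hb2 : ∀ t ∈ B (j - 1), Real.sqrt (ν tmin) ≤ Real.sqrt (ν t) := by
              intro t ht
              rw [B_def, Finset.mem_filter] at ht
              refine Real.sqrt_le_sqrt (hanti t tmin ?_)
              show (t : ℕ) ≤ (tmin : ℕ)
              have hmod := Nat.div_add_mod (t : ℕ) r
              have hltr := Nat.mod_lt (t : ℕ) (show 0 < r by omega)
              rw [ht.2] at hmod
              have : (t : ℕ) < (j - 1) * r + r := by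
                rw [Nat.mul_comm]; omega
              rw [hjr_eq] at this
              exact le_of_lt this
            calc (r : ℝ) * Real.sqrt (ν tmin)
                ≤ ((B (j - 1)).card : ℝ) * Real.sqrt (ν tmin) := by
                  refine mul_le_mul_of_nonneg_right ?_ (Real.sqrt_nonneg _)
                  exact_mod_cast hcard
              _ = (B (j - 1)).card • Real.sqrt (ν tmin) := (nsmul_eq_mul _ _).symm
              _ ≤ ∑ t ∈ B (j - 1), Real.sqrt (ν t) :=
                  Finset.card_nsmul_le_sum _ _ _ hb2
          calc Real.sqrt (∑ t ∈ B j, ν t) ≤ Real.sqrt ((r : ℝ) * ν tmin) :=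
                Real.sqrt_le_sqrt h1
            _ = Real.sqrt r * Real.sqrt (ν tmin) := Real.sqrt_mul (le_of_lt hrR) _
            _ = ((r : ℝ) * Real.sqrt (ν tmin)) / Real.sqrt r := by
                rw [eq_div_iff (ne_of_gt hsr)]
                rw [show Real.sqrt ↑r * Real.sqrt (ν tmin) * Real.sqrt ↑r
                    = (Real.sqrt ↑r * Real.sqrt ↑r) * Real.sqrt (ν tmin) by ring,
                  Real.mul_self_sqrt (le_of_lt hrR)]
            _ ≤ (∑ t ∈ B (j - 1), Real.sqrt (ν t)) / Real.sqrt r := by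
                exact div_le_div_of_nonneg_right h2 hsr.le
      have hsum2 : ∑ j ∈ Finset.Ico 1 n, ∑ t ∈ B (j - 1), Real.sqrt (ν t)
          ≤ ∑ t, Real.sqrt (ν t) := by
        rw [Finset.sum_Ico_eq_sum_range]
        simp only [Nat.add_sub_cancel_left]
        calc ∑ j ∈ Finset.range (n - 1), ∑ t ∈ B j, Real.sqrt (ν t)
            ≤ ∑ j ∈ Finset.range n, ∑ t ∈ B j, Real.sqrt (ν t) := by
              refine Finset.sum_le_sum_of_subset_of_nonneg
                (Finset.range_subset_range.mpr (by omega)) ?_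
              intro j _ _
              exact Finset.sum_nonneg fun t _ => Real.sqrt_nonneg _
          _ = ∑ t, Real.sqrt (ν t) := hpart _ _
      calc Real.sqrt (∑ t ∈ B 0, ν t) + ∑ j ∈ Finset.Ico 1 n, Real.sqrt (∑ t ∈ B j, ν t)
          ≤ Real.sqrt (∑ t, ν t)
            + ∑ j ∈ Finset.Ico 1 n, (∑ t ∈ B (j - 1), Real.sqrt (ν t)) / Real.sqrt r :=
            add_le_add hterm0 (Finset.sum_le_sum hterm)
        _ = Real.sqrt (∑ t, ν t)
            + (∑ j ∈ Finset.Ico 1 n, ∑ t ∈ B (j - 1), Real.sqrt (ν t)) / Real.sqrt r := by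
            rw [Finset.sum_div]
        _ ≤ Real.sqrt (∑ t, ν t) + (∑ t, Real.sqrt (ν t)) / Real.sqrt r := by
            refine add_le_add_right ?_ _
            exact div_le_div_of_nonneg_right hsum2 hsr.le
  -- final assembly
  calc eNorm (A Z) = eNorm (∑ j ∈ Finset.range n, A (N (B j))) := by
        rw [← map_sum, ← hZ]
    _ ≤ ∑ j ∈ Finset.range n, eNorm (A (N (B j))) := eNorm_sum_le _ _
    _ ≤ ∑ j ∈ Finset.range n, Real.sqrt (1 + δ) * Real.sqrt (∑ t ∈ B j, ν t) :=
        Finset.sum_le_sum fun j _ => stepN (B j) (cardB j)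
    _ = Real.sqrt (1 + δ) * ∑ j ∈ Finset.range n, Real.sqrt (∑ t ∈ B j, ν t) :=
        (Finset.mul_sum _ _ _).symm
    _ ≤ Real.sqrt (1 + δ) * (Real.sqrt (∑ t, ν t) + (∑ t, Real.sqrt (ν t)) / Real.sqrt r) :=
        mul_le_mul_of_nonneg_left sumBound (Real.sqrt_nonneg _)
    _ = Real.sqrt (1 + δ) * (frobNorm Z + nuclearNorm Z / Real.sqrt r) := by
        rw [frobZ, nucZ]

/-- Noise conversion lemma: with `X_{0,r}` a best rank-`r` approximation of `X₀`
and `b = A X₀ + ν`, we can write `b = A X_{0,r} + ν̃` with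
`‖ν̃‖₂ ≤ √(1+δ_r(A)) (‖X₀ − X_{0,r}‖_F + ‖X₀ − X_{0,r}‖_*/√r) + ‖ν‖₂`. -/
theorem noise_lemma {m n p r : ℕ} (hr : 1 ≤ r)
    (A : Matrix (Fin m) (Fin n) ℂ →ₗ[ℂ] (Fin p → ℂ))
    (δ : ℝ) (hδ0 : 0 ≤ δ) (hA : RIPwith A r δ)
    (X₀ X0r : Matrix (Fin m) (Fin n) ℂ)
    (hrank : X0r.rank ≤ r)
    (hbest : ∀ Y : Matrix (Fin m) (Fin n) ℂ, Y.rank ≤ r →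
      frobNorm (X₀ - X0r) ≤ frobNorm (X₀ - Y))
    (ν b : Fin p → ℂ) (hb : b = A X₀ + ν) :
    ∃ νtilde : Fin p → ℂ, b = A X0r + νtilde ∧
      eNorm νtilde ≤ Real.sqrt (1 + δ) *
          (frobNorm (X₀ - X0r) + nuclearNorm (X₀ - X0r) / Real.sqrt r)
        + eNorm ν := by
  refine ⟨A (X₀ - X0r) + ν, ?_, ?_⟩
  · rw [hb]
    have h : A X₀ = A X0r + A (X₀ - X0r) := by
      rw [← map_add]
      congr 1
      abel
    rw [h, add_assoc]
  · calc eNorm (A (X₀ - X0r) + ν) ≤ eNorm (A (X₀ - X0r)) + eNorm ν := eNorm_add_le _ _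
      _ ≤ Real.sqrt (1 + δ) *
            (frobNorm (X₀ - X0r) + nuclearNorm (X₀ - X0r) / Real.sqrt r) + eNorm ν :=
          add_le_add_left (AZ_bound hr A δ hδ0 hA (X₀ - X0r)) _
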